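/- Let π : E → E be a bijection with permutation matrix P, let σ : ℂ → ℂ be any function applied entrywise, and let Z_e ∈ ℂ^{E×a}, W_b ∈ ℂ^{a×c}, Z_i ∈ ℂ^{E×c}, W_a ∈ ℂ^{c×c}. Then σ( ((P·Z_i) · W_a) ⊙ abs((P·Z_e) · W_b) + P·Z_i ) = P · σ( (Z_i · W_a) ⊙ abs(Z_e · W_b) + Z_i ); that is, the invariant EIGN fusion operation is permutation equivariant. -/

import Mathlib

open Matrix

/-- The permutation matrix of a bijection `π : E ≃ E`:
`[P]_{e,e'} = 1` if `e = π e'` and `0` otherwise. -/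
noncomputable def permMatrix {E : Type*} [DecidableEq E] (π : Equiv.Perm E) : Matrix E E ℂ :=
  Matrix.of fun e e' => if e = π e' then 1 else 0

/-- Entrywise complex absolute value of a matrix, viewed in `ℂ`. -/
noncomputable def absMat {m n : Type*} (M : Matrix m n ℂ) : Matrix m n ℂ :=
  M.map fun z => ((‖z‖ : ℝ) : ℂ)

lemma permMatrix_mul_apply {E n : Type*} [Fintype E] [DecidableEq E]
    (π : Equiv.Perm E) (M : Matrix E n ℂ) (e : E) (j : n) :
    (permMatrix π * M) e j = M (π⁻¹ e) j := by
  simp only [Matrix.mul_apply, permMatrix, Matrix.of_apply]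
  rw [Finset.sum_eq_single (π⁻¹ e)]
  · simp
  · intro b _ hb
    rw [if_neg, zero_mul]
    intro h
    exact hb (by simp [h])
  · simp


lemma permMatrix_mul_mul_apply {E n p : Type*} [Fintype E] [DecidableEq E] [Fintype n]
    (π : Equiv.Perm E) (M : Matrix E n ℂ) (W : Matrix n p ℂ) (e : E) (j : p) :
    (permMatrix π * M * W) e j = (M * W) (π⁻¹ e) j := by
  rw [Matrix.mul_apply, Matrix.mul_apply]
  exact Finset.sum_congr rfl fun k _ => by rw [permMatrix_mul_apply]

/-- The invariant EIGN fusion operation is permutation equivariant: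
`σ(((P Z_i) W_a) ⊙ abs((P Z_e) W_b) + P Z_i) = P σ((Z_i W_a) ⊙ abs(Z_e W_b) + Z_i)`. -/
theorem eign_invariant_fusion_permutation_equivariant
    {E a c : Type*} [Fintype E] [DecidableEq E] [Fintype a] [Fintype c]
    (π : Equiv.Perm E) (σ : ℂ → ℂ)
    (Ze : Matrix E a ℂ) (Wb : Matrix a c ℂ)
    (Zi : Matrix E c ℂ) (Wa : Matrix c c ℂ) :
    ((((permMatrix π * Zi) * Wa).hadamard (absMat ((permMatrix π * Ze) * Wb)))
        + permMatrix π * Zi).map σ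
      = permMatrix π * ((((Zi * Wa).hadamard (absMat (Ze * Wb))) + Zi).map σ) := by
  ext e j
  simp only [Matrix.map_apply, Matrix.add_apply, Matrix.hadamard_apply, permMatrix_mul_apply,
    permMatrix_mul_mul_apply, absMat]
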